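/- On ℝ[y₁,…,yₙ], the following two operator identities hold: g∘tr = (𝒩 + 𝒞 − 1)∘(𝒩 − 𝒞 − 1) and tr∘g = (𝒩 + 𝒞 + 1)∘(𝒩 − 𝒞 + 1), where 𝒩 = N + n/2 and 𝒞 is the diagonal square-root-of-Casimir operator. -/

import Mathlib

open MvPolynomial Finset

/-- The index-counting (Euler) operator `N = Σᵢ yᵢ ∂/∂yᵢ` on `ℝ[y₁,…,yₙ]`. -/
noncomputable def opN (n : ℕ) : Module.End ℝ (MvPolynomial (Fin n) ℝ) :=
  ∑ i : Fin n, (LinearMap.mulLeft ℝ (X i)) ∘ₗ (pderiv i).toLinearMap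

/-- Multiplication by `Σᵢ yᵢ²` on `ℝ[y₁,…,yₙ]`. -/
noncomputable def opG (n : ℕ) : Module.End ℝ (MvPolynomial (Fin n) ℝ) :=
  LinearMap.mulLeft ℝ (∑ i : Fin n, X i ^ 2)

/-- The trace (Laplacian) operator `tr = Σᵢ ∂²/∂yᵢ²` on `ℝ[y₁,…,yₙ]`. -/
noncomputable def opTr (n : ℕ) : Module.End ℝ (MvPolynomial (Fin n) ℝ) :=
  ∑ i : Fin n, (pderiv i).toLinearMap ∘ₗ (pderiv i).toLinearMap

noncomputable def gpoly (n : ℕ) : MvPolynomial (Fin n) ℝ := ∑ i : Fin n, X i ^ 2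

variable {n : ℕ}

lemma opG_apply (p : MvPolynomial (Fin n) ℝ) : opG n p = gpoly n * p := rfl
lemma opN_apply (p : MvPolynomial (Fin n) ℝ) : opN n p = ∑ i : Fin n, X i * pderiv i p := by
  simp [opN]
lemma opTr_apply (p : MvPolynomial (Fin n) ℝ) :
    opTr n p = ∑ i : Fin n, pderiv i (pderiv i p) := by simp [opTr]

lemma pderiv_gpoly (i : Fin n) : pderiv i (gpoly n) = 2 * X i := by
  simp [gpoly, Derivation.leibniz_pow, Pi.single_apply]

lemma degree_eq_sum (m : Fin n →₀ ℕ) : m.degree = ∑ i : Fin n, m i := by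
  rw [Finsupp.degree]
  exact Finset.sum_subset (subset_univ _) (fun i _ hi => Finsupp.notMem_support_iff.mp hi)

lemma single_add_tsub (m : Fin n →₀ ℕ) (i : Fin n) (h : 1 ≤ m i) :
    Finsupp.single i 1 + (m - Finsupp.single i 1) = m := by
  ext j
  rw [Finsupp.add_apply, Finsupp.tsub_apply, Finsupp.single_apply]
  rcases eq_or_ne i j with rfl | hne
  · simp only [if_true, eq_self_iff_true]; omega
  · simp only [if_neg hne]; omega

lemma X_mul_pderiv_monomial (m : Fin n →₀ ℕ) (c : ℝ) (i : Fin n) :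
    X i * pderiv i (monomial m c) = (m i : ℝ) • monomial m c := by
  rw [pderiv_monomial]
  rcases Nat.eq_zero_or_pos (m i) with h0 | h1
  · simp [h0]
  · rw [X, monomial_mul, smul_monomial, single_add_tsub m i h1]
    congr 1
    simp only [smul_eq_mul]; ring

lemma opN_monomial (m : Fin n →₀ ℕ) (c : ℝ) :
    opN n (monomial m c) = ((m.degree : ℝ)) • monomial m c := by
  rw [opN_apply, degree_eq_sum]
  push_cast
  rw [Finset.sum_smul]
  exact Finset.sum_congr rfl fun i _ => X_mul_pderiv_monomial m c i

lemma euler {p : MvPolynomial (Fin n) ℝ} {d : ℕ} (h : p.IsHomogeneous d) :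
    opN n p = (d : ℝ) • p := by
  conv_lhs => rw [← p.support_sum_monomial_coeff]
  rw [map_sum]
  conv_rhs => rw [← p.support_sum_monomial_coeff, Finset.smul_sum]
  refine Finset.sum_congr rfl fun m hm => ?_
  rw [opN_monomial]
  have hd : m.degree = d := by
    by_contra h'
    exact mem_support_iff.mp hm (h.coeff_eq_zero h')
  rw [hd]

lemma isHomogeneous_pderiv {p : MvPolynomial (Fin n) ℝ} {d : ℕ} (h : p.IsHomogeneous d)
    (i : Fin n) : (pderiv i p).IsHomogeneous (d - 1) := by
  conv in pderiv i p => rw [← p.support_sum_monomial_coeff]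
  rw [map_sum]
  refine IsHomogeneous.sum _ _ _ fun m hm => ?_
  rw [pderiv_monomial]
  rcases Nat.eq_zero_or_pos (m i) with h0 | h1
  · simp only [h0, Nat.cast_zero, mul_zero, map_zero]
    exact isHomogeneous_zero _ _ _
  · apply isHomogeneous_monomial
    have hd : m.degree = d := by
      by_contra h'
      exact mem_support_iff.mp hm (h.coeff_eq_zero h')
    rw [degree_eq_sum] at hd ⊢
    have key : ∀ j : Fin n, (m - Finsupp.single i 1 : Fin n →₀ ℕ) j = m j - (if i = j then 1 else 0) := by
      intro j; rw [Finsupp.tsub_apply, Finsupp.single_apply]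
    rw [Finset.sum_congr rfl fun j _ => key j]
    rw [← Finset.sum_erase_add _ _ (mem_univ i)] at hd ⊢
    have h2 : ∑ x ∈ univ.erase i, (m x - if i = x then 1 else 0) = ∑ x ∈ univ.erase i, m x :=
      Finset.sum_congr rfl fun j hj => by
        rw [if_neg fun h => (Finset.ne_of_mem_erase hj) h.symm, Nat.sub_zero]
    rw [h2, if_pos rfl]
    omega

lemma isHomogeneous_opTr {p : MvPolynomial (Fin n) ℝ} {d : ℕ} (h : p.IsHomogeneous d) :
    (opTr n p).IsHomogeneous (d - 2) := by
  rw [opTr_apply]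
  refine IsHomogeneous.sum _ _ _ fun i _ => ?_
  have := isHomogeneous_pderiv (isHomogeneous_pderiv h i) i
  rwa [Nat.sub_sub] at this

lemma pderiv_of_homog_zero {p : MvPolynomial (Fin n) ℝ} (h : p.IsHomogeneous 0) (i : Fin n) :
    pderiv i p = 0 := by
  conv_lhs => rw [← p.support_sum_monomial_coeff]
  rw [map_sum]
  refine Finset.sum_eq_zero fun m hm => ?_
  have hd : m.degree = 0 := by
    by_contra h'
    exact mem_support_iff.mp hm (h.coeff_eq_zero h')
  have hmi : m i = 0 := by
    rw [degree_eq_sum] at hd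
    exact Finset.sum_eq_zero_iff.mp hd i (mem_univ i)
  simp [pderiv_monomial, hmi]

-- commutators
lemma pderiv_two (i : Fin n) : pderiv i (2 : MvPolynomial (Fin n) ℝ) = 0 := by
  rw [(map_ofNat C 2).symm]
  exact pderiv_C

lemma opN_g_mul (p : MvPolynomial (Fin n) ℝ) :
    opN n (gpoly n * p) = 2 * (gpoly n * p) + gpoly n * opN n p := by
  rw [opN_apply, opN_apply]
  have key : ∀ i : Fin n, X i * pderiv i (gpoly n * p)
      = 2 * (X i ^ 2 * p) + gpoly n * (X i * pderiv i p) := fun i => by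
    rw [pderiv_mul, pderiv_gpoly]; ring
  rw [Finset.sum_congr rfl fun i _ => key i, Finset.sum_add_distrib, ← Finset.mul_sum,
    ← Finset.mul_sum, ← Finset.sum_mul, ← gpoly]

lemma opTr_g_mul (p : MvPolynomial (Fin n) ℝ) :
    opTr n (gpoly n * p) =
      (n : MvPolynomial (Fin n) ℝ) * (2 * p) + 4 * opN n p + gpoly n * opTr n p := by
  rw [opTr_apply, opTr_apply, opN_apply]
  have key : ∀ i : Fin n, pderiv i (pderiv i (gpoly n * p))
      = 2 * p + 4 * (X i * pderiv i p) + gpoly n * pderiv i (pderiv i p) := fun i => by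
    simp only [pderiv_mul, map_add, pderiv_gpoly, pderiv_two, pderiv_X_self]
    ring
  rw [Finset.sum_congr rfl fun i _ => key i, Finset.sum_add_distrib, Finset.sum_add_distrib,
    ← Finset.mul_sum, ← Finset.mul_sum, ← Finset.mul_sum, Finset.sum_const, Finset.card_univ,
    Fintype.card_fin, nsmul_eq_mul]
  ring

lemma opG_pow_apply (k : ℕ) (p : MvPolynomial (Fin n) ℝ) :
    (opG n ^ k) p = gpoly n ^ k * p := by
  induction k with
  | zero => simp
  | succ k ih => rw [pow_succ', Module.End.mul_apply, ih, opG_apply, pow_succ']; ring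

lemma nat_mul_eq (m : ℕ) (q : MvPolynomial (Fin n) ℝ) :
    (m : MvPolynomial (Fin n) ℝ) * q = (m : ℝ) • q := by
  rw [smul_eq_C_mul, map_natCast]

lemma two_mul_eq (q : MvPolynomial (Fin n) ℝ) : 2 * q = (2 : ℝ) • q := by
  rw [smul_eq_C_mul, map_ofNat]

lemma four_mul_eq (q : MvPolynomial (Fin n) ℝ) : 4 * q = (4 : ℝ) • q := by
  rw [smul_eq_C_mul, map_ofNat]

lemma opN_pow (k : ℕ) {s : ℕ} {Φ : MvPolynomial (Fin n) ℝ} (hΦ : Φ.IsHomogeneous s) :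
    opN n ((opG n ^ k) Φ) = ((s : ℝ) + 2 * k) • ((opG n ^ k) Φ) := by
  induction k with
  | zero => simpa using euler hΦ
  | succ k ih =>
    rw [pow_succ', Module.End.mul_apply, opG_apply, opN_g_mul, ih, mul_smul_comm, two_mul_eq]
    push_cast
    module

lemma opTr_opG_pow (k : ℕ) {s : ℕ} {Φ : MvPolynomial (Fin n) ℝ} (hΦ : Φ.IsHomogeneous s)
    (hH : opTr n Φ = 0) :
    opTr n ((opG n ^ (k + 1)) Φ) =
      ((2 * (k : ℝ) + 2) * (2 * s + 2 * k + n)) • ((opG n ^ k) Φ) := by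
  induction k with
  | zero =>
    rw [pow_one, pow_zero, Module.End.one_apply, opG_apply, opTr_g_mul, hH, euler hΦ, mul_zero,
      add_zero, nat_mul_eq, two_mul_eq, four_mul_eq]
    push_cast
    module
  | succ k ih =>
    rw [pow_succ' (opG n) (k+1), Module.End.mul_apply, opG_apply, opTr_g_mul, ih, opN_pow _ hΦ,
      mul_smul_comm, ← opG_apply, map_smul, ← Module.End.mul_apply (opG n), ← pow_succ',
      nat_mul_eq, two_mul_eq, four_mul_eq]
    push_cast
    module

def Sgen (n : ℕ) : Set (MvPolynomial (Fin n) ℝ) :=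
  {p | ∃ (s k : ℕ) (Φ : MvPolynomial (Fin n) ℝ),
    Φ.IsHomogeneous s ∧ opTr n Φ = 0 ∧ p = (opG n ^ k) Φ}

lemma gpoly_homog : (gpoly n).IsHomogeneous 2 :=
  IsHomogeneous.sum _ _ _ fun i _ => isHomogeneous_X_pow (R := ℝ) i 2

lemma Sgen_homog {p : MvPolynomial (Fin n) ℝ} (hp : p ∈ Sgen n) :
    ∃ d : ℕ, p.IsHomogeneous d := by
  obtain ⟨s, k, Φ, hΦ, -, rfl⟩ := hp
  exact ⟨2 * k + s, by rw [opG_pow_apply]; exact (gpoly_homog.pow k).mul hΦ⟩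

lemma opG_span_stable {q : MvPolynomial (Fin n) ℝ}
    (hq : q ∈ Submodule.span ℝ (Sgen n)) : opG n q ∈ Submodule.span ℝ (Sgen n) := by
  revert q
  rw [show (∀ q, q ∈ Submodule.span ℝ (Sgen n) → opG n q ∈ Submodule.span ℝ (Sgen n)) ↔
    Submodule.span ℝ (Sgen n) ≤ Submodule.comap (opG n) (Submodule.span ℝ (Sgen n)) from
    Iff.rfl]
  refine Submodule.span_le.mpr fun p hp => ?_
  obtain ⟨s, k, Φ, hΦ, hH, rfl⟩ := hp
  refine Submodule.subset_span ⟨s, k + 1, Φ, hΦ, hH, ?_⟩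
  rw [pow_succ', Module.End.mul_apply]

lemma comp_span_stable (e : ℕ) {q : MvPolynomial (Fin n) ℝ}
    (hq : q ∈ Submodule.span ℝ (Sgen n)) :
    homogeneousComponent e q ∈ Submodule.span ℝ (Sgen n) := by
  revert q
  rw [show (∀ q, q ∈ Submodule.span ℝ (Sgen n) →
      homogeneousComponent e q ∈ Submodule.span ℝ (Sgen n)) ↔
    Submodule.span ℝ (Sgen n) ≤
      Submodule.comap (homogeneousComponent e) (Submodule.span ℝ (Sgen n)) from Iff.rfl]
  refine Submodule.span_le.mpr fun p hp => ?_
  obtain ⟨d, hd⟩ := Sgen_homog hp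
  rw [SetLike.mem_coe, Submodule.mem_comap,
    homogeneousComponent_of_mem ((mem_homogeneousSubmodule d p).mpr hd)]
  split
  · exact Submodule.subset_span hp
  · exact Submodule.zero_mem _

lemma L_homog {j : ℕ} {q : MvPolynomial (Fin n) ℝ} (h : q.IsHomogeneous j) :
    ((opTr n * opG n) q).IsHomogeneous j := by
  have h1 : (gpoly n * q).IsHomogeneous (2 + j) := gpoly_homog.mul h
  have := isHomogeneous_opTr h1
  rw [Nat.add_sub_cancel_left] at this
  rwa [Module.End.mul_apply, opG_apply]

lemma comp_L_commute (e : ℕ) (q : MvPolynomial (Fin n) ℝ) :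
    homogeneousComponent e ((opTr n * opG n) q) =
      (opTr n * opG n) (homogeneousComponent e q) := by
  conv_lhs => rw [← sum_homogeneousComponent q]
  rw [map_sum, map_sum]
  by_cases he : e < q.totalDegree + 1
  · rw [Finset.sum_eq_single_of_mem e (Finset.mem_range.mpr he)]
    · rw [homogeneousComponent_of_mem ((mem_homogeneousSubmodule _ _).mpr
        (L_homog (homogeneousComponent_isHomogeneous e q))), if_pos rfl]
    · intro j _ hj
      rw [homogeneousComponent_of_mem ((mem_homogeneousSubmodule _ _).mpr
        (L_homog (homogeneousComponent_isHomogeneous j q))), if_neg (Ne.symm hj)]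
  · rw [Finset.sum_eq_zero, homogeneousComponent_eq_zero e q (by omega), map_zero]
    intro j hj
    rw [homogeneousComponent_of_mem ((mem_homogeneousSubmodule _ _).mpr
      (L_homog (homogeneousComponent_isHomogeneous j q))),
      if_neg (by rw [Finset.mem_range] at hj; omega)]

lemma span_surj (hn : 1 ≤ n) :
    Submodule.span ℝ (Sgen n) ≤
      Submodule.map (opTr n * opG n) (Submodule.span ℝ (Sgen n)) := by
  refine Submodule.span_le.mpr fun p hp => ?_
  obtain ⟨s, k, Φ, hΦ, hH, rfl⟩ := hp
  set c : ℝ := (2 * (k : ℝ) + 2) * (2 * s + 2 * k + n) with hc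
  have hcpos : 0 < c := by
    have h1 : (1 : ℝ) ≤ (n : ℝ) := by exact_mod_cast hn
    have h2 : (0 : ℝ) ≤ (k : ℝ) := Nat.cast_nonneg k
    have h3 : (0 : ℝ) ≤ (s : ℝ) := Nat.cast_nonneg s
    nlinarith
  refine ⟨c⁻¹ • (opG n ^ k) Φ,
    Submodule.smul_mem _ _ (Submodule.subset_span ⟨s, k, Φ, hΦ, hH, rfl⟩), ?_⟩
  rw [map_smul, Module.End.mul_apply, ← Module.End.mul_apply (opG n), ← pow_succ',
    opTr_opG_pow k hΦ hH, smul_smul, inv_mul_cancel₀ hcpos.ne', one_smul]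

lemma homog_mem_span : ∀ (d : ℕ) (p : MvPolynomial (Fin n) ℝ),
    p.IsHomogeneous d → p ∈ Submodule.span ℝ (Sgen n) := by
  intro d
  induction d using Nat.strong_induction_on with
  | _ d IH =>
  intro p hp
  match d, hp, IH with
  | 0, hp, IH =>
    refine Submodule.subset_span ⟨0, 0, p, hp, ?_, by simp⟩
    rw [opTr_apply]
    exact Finset.sum_eq_zero fun i _ => by rw [pderiv_of_homog_zero hp i, map_zero]
  | 1, hp, IH =>
    refine Submodule.subset_span ⟨1, 0, p, hp, ?_, by simp⟩
    rw [opTr_apply]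
    refine Finset.sum_eq_zero fun i _ => ?_
    rw [pderiv_of_homog_zero (isHomogeneous_pderiv hp i) i]
  | (e+2), hp, IH =>
    by_cases hn : n = 0
    · subst hn
      by_cases hp0 : p = 0
      · simp [hp0]
      · exfalso
        have h0 : p.IsHomogeneous 0 := by
          rw [eq_C_of_isEmpty p]
          exact isHomogeneous_C _ _
        have := hp.inj_right h0 hp0
        omega
    · have hn1 : 1 ≤ n := Nat.pos_of_ne_zero hn
      have htr : (opTr n p).IsHomogeneous e := by
        have := isHomogeneous_opTr hp
        rwa [Nat.add_sub_cancel] at this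
      have htrS : opTr n p ∈ Submodule.span ℝ (Sgen n) := IH e (by omega) _ htr
      obtain ⟨q, hqS, hqE⟩ := span_surj hn1 htrS
      set q' := homogeneousComponent e q with hq'
      have hq'S : q' ∈ Submodule.span ℝ (Sgen n) := comp_span_stable e hqS
      have hq'E : (opTr n * opG n) q' = opTr n p := by
        rw [hq', ← comp_L_commute, hqE,
          homogeneousComponent_of_mem ((mem_homogeneousSubmodule _ _).mpr htr), if_pos rfl]
      have hq'hom : q'.IsHomogeneous e := homogeneousComponent_isHomogeneous e q
      have hhom : (p - opG n q').IsHomogeneous (e + 2) := by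
        refine hp.sub ?_
        rw [opG_apply]
        have := gpoly_homog.mul hq'hom
        rwa [Nat.add_comm] at this
      have htrh : opTr n (p - opG n q') = 0 := by
        rw [map_sub, ← Module.End.mul_apply (opTr n) (opG n) q', hq'E, sub_self]
      have hmem : p - opG n q' ∈ Submodule.span ℝ (Sgen n) :=
        Submodule.subset_span ⟨e + 2, 0, p - opG n q', hhom, htrh, by simp⟩
      have : p = (p - opG n q') + opG n q' := by ring
      rw [this]
      exact Submodule.add_mem _ hmem (opG_span_stable hq'S)

lemma span_Sgen_top : Submodule.span ℝ (Sgen n) = ⊤ := by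
  rw [eq_top_iff]
  intro p _
  rw [← sum_homogeneousComponent p]
  exact Submodule.sum_mem _ fun i _ =>
    homog_mem_span i _ (homogeneousComponent_isHomogeneous i p)

/-- `g∘tr = (𝒩+𝒞−1)∘(𝒩−𝒞−1)` and `tr∘g = (𝒩+𝒞+1)∘(𝒩−𝒞+1)`, where
`𝒩 = N + n/2` and `𝒞` is the diagonal square-root-of-Casimir operator. -/
theorem stmt7 (n : ℕ) (C : Module.End ℝ (MvPolynomial (Fin n) ℝ))
    (hC : ∀ (s k : ℕ) (Φ : MvPolynomial (Fin n) ℝ),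
      opN n Φ = (s : ℝ) • Φ → opTr n Φ = 0 →
      C ((opG n ^ k) Φ) = ((s : ℝ) + ((n : ℝ) - 2) / 2) • (opG n ^ k) Φ) :
    let NN : Module.End ℝ (MvPolynomial (Fin n) ℝ) := opN n + ((n : ℝ) / 2) • 1
    opG n * opTr n = (NN + C - 1) * (NN - C - 1) ∧
    opTr n * opG n = (NN + C + 1) * (NN - C + 1) := by
  intro NN
  have hNN : NN = opN n + ((n : ℝ) / 2) • 1 := rfl
  have key : ∀ p ∈ Sgen n,
      (opG n * opTr n) p = ((NN + C - 1) * (NN - C - 1)) p ∧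
      (opTr n * opG n) p = ((NN + C + 1) * (NN - C + 1)) p := by
    rintro p ⟨s, k, Φ, hΦ, hH, rfl⟩
    have hCv : C ((opG n ^ k) Φ) = ((s : ℝ) + ((n : ℝ) - 2) / 2) • (opG n ^ k) Φ :=
      hC s k Φ (euler hΦ) hH
    have hNv : opN n ((opG n ^ k) Φ) = ((s : ℝ) + 2 * k) • ((opG n ^ k) Φ) := opN_pow k hΦ
    have h1 : (NN - C - 1) ((opG n ^ k) Φ) = (2 * (k : ℝ)) • ((opG n ^ k) Φ) := by
      simp only [hNN, LinearMap.sub_apply, LinearMap.add_apply, LinearMap.smul_apply,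
        Module.End.one_apply, hNv, hCv]
      module
    have h2 : (NN + C - 1) ((opG n ^ k) Φ) =
        (2 * (s : ℝ) + 2 * k + n - 2) • ((opG n ^ k) Φ) := by
      simp only [hNN, LinearMap.sub_apply, LinearMap.add_apply, LinearMap.smul_apply,
        Module.End.one_apply, hNv, hCv]
      module
    have h3 : (NN + C + 1) ((opG n ^ k) Φ) =
        (2 * (s : ℝ) + 2 * k + n) • ((opG n ^ k) Φ) := by
      simp only [hNN, LinearMap.add_apply, LinearMap.smul_apply,
        Module.End.one_apply, hNv, hCv]
      module
    have h4 : (NN - C + 1) ((opG n ^ k) Φ) = (2 * (k : ℝ) + 2) • ((opG n ^ k) Φ) := by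
      simp only [hNN, LinearMap.sub_apply, LinearMap.add_apply, LinearMap.smul_apply,
        Module.End.one_apply, hNv, hCv]
      module
    constructor
    · rw [Module.End.mul_apply, Module.End.mul_apply, h1, map_smul, h2, smul_smul]
      cases k with
      | zero => rw [pow_zero, Module.End.one_apply, hH, map_zero]; norm_num
      | succ j =>
        rw [opTr_opG_pow j hΦ hH, map_smul, ← Module.End.mul_apply (opG n), ← pow_succ']
        congr 1
        push_cast; ring
    · rw [Module.End.mul_apply, Module.End.mul_apply, h4, map_smul, h3, smul_smul,
        ← Module.End.mul_apply (opG n) (opG n ^ k) Φ, ← pow_succ', opTr_opG_pow k hΦ hH]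
  constructor
  · exact LinearMap.ext_on span_Sgen_top fun p hp => (key p hp).1
  · exact LinearMap.ext_on span_Sgen_top fun p hp => (key p hp).2
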